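/- Let A, B, C, D, q ∈ ℂ with A ≠ 0, B ≠ 0, and 0 < |q| < 1. Let f be meromorphic on ℂ and satisfy f'(z) = A·f(qz) + B·f(z)^2 + C·f(z) + D at every point z at which f is analytic at both z and qz. Then every pole of f is simple (f has order exactly −1 there), and the residue of f at each pole equals −1/B. -/

import Mathlib

open Filter Topology


lemma aux_zpow_tendsto (z₀ : ℂ) (e : ℤ) (he : 1 ≤ e) :
    Tendsto (fun z : ℂ => (z - z₀) ^ e) (𝓝[≠] z₀) (𝓝 0) := by
  have hk : e = (e.toNat : ℤ) := (Int.toNat_of_nonneg (by linarith)).symm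
  have hc : Continuous (fun z : ℂ => (z - z₀) ^ e.toNat) :=
    (continuous_id.sub continuous_const).pow e.toNat
  have h1 : Tendsto (fun z : ℂ => (z - z₀) ^ e.toNat) (𝓝 z₀) (𝓝 0) := by
    have := hc.tendsto z₀
    simpa [zero_pow (show e.toNat ≠ 0 by omega)] using this
  have h2 := h1.mono_left (nhdsWithin_le_nhds (s := {z₀}ᶜ))
  refine h2.congr fun z => ?_
  conv_rhs => rw [hk]
  exact (zpow_natCast _ _).symm

lemma aux_map (q z₀ : ℂ) (hq : q ≠ 0) :
    Tendsto (fun z : ℂ => q * z) (𝓝[≠] z₀) (𝓝[≠] (q * z₀)) := by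
  apply tendsto_nhdsWithin_of_tendsto_nhds_of_eventually_within
  · exact ((continuous_const.mul continuous_id).tendsto z₀).mono_left nhdsWithin_le_nhds
  · filter_upwards [self_mem_nhdsWithin] with z hz
    simp only [Set.mem_compl_iff, Set.mem_singleton_iff] at hz ⊢
    exact fun h => hz (mul_left_cancel₀ hq h)

lemma aux_nonneg {f : ℂ → ℂ} {x : ℂ} (h : AnalyticAt ℂ f x) (hm : MeromorphicAt f x) :
    0 ≤ meromorphicOrderAt f x := by
  exact h.meromorphicOrderAt_nonneg

lemma aux_term (q z₀ : ℂ) (hq : q ≠ 0) (f : ℂ → ℂ) (hfq : MeromorphicAt f (q * z₀))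
    (k : ℕ) (hk : -(k : ℤ) < meromorphicOrderAt f (q * z₀)) :
    Tendsto (fun z : ℂ => (z - z₀) ^ (k : ℕ) * f (q * z)) (𝓝[≠] z₀) (𝓝 0) := by
  rcases eq_or_ne (meromorphicOrderAt f (q * z₀)) ⊤ with htop | hne
  · -- f vanishes near q*z₀
    have hz := meromorphicOrderAt_eq_top_iff.mp htop
    have : ∀ᶠ z in 𝓝[≠] z₀, f (q * z) = 0 := (aux_map q z₀ hq).eventually hz
    have h0 : Tendsto (fun _ : ℂ => (0 : ℂ)) (𝓝[≠] z₀) (𝓝 0) := tendsto_const_nhds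
    refine h0.congr' ?_
    filter_upwards [this] with z hz2
    simp [hz2]
  · obtain ⟨j, hj⟩ := WithTop.ne_top_iff_exists.mp hne
    obtain ⟨g, hg, hg0, hfg⟩ := (meromorphicOrderAt_eq_int_iff hfq).mp hj.symm
    have hjk : -(k : ℤ) < j := by rw [← hj] at hk; exact_mod_cast hk
    have hpull : ∀ᶠ z in 𝓝[≠] z₀, f (q * z) = (q * z - q * z₀) ^ j • g (q * z) :=
      (aux_map q z₀ hq).eventually hfg
    have hgt : Tendsto (fun z : ℂ => g (q * z)) (𝓝[≠] z₀) (𝓝 (g (q * z₀))) := by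
      have := hg.continuousAt.tendsto
      exact this.comp (((aux_map q z₀ hq).mono_right nhdsWithin_le_nhds))
    have hzt : Tendsto (fun z : ℂ => q ^ j * (z - z₀) ^ ((k : ℤ) + j)) (𝓝[≠] z₀) (𝓝 0) := by
      have := (aux_zpow_tendsto z₀ ((k : ℤ) + j) (by omega)).const_mul (q ^ j)
      simpa using this
    have := hzt.mul hgt
    rw [zero_mul] at this
    refine this.congr' ?_
    filter_upwards [hpull, self_mem_nhdsWithin] with z hz2 hz3
    simp only [Set.mem_compl_iff, Set.mem_singleton_iff] at hz3
    have hzz : z - z₀ ≠ 0 := sub_ne_zero.mpr hz3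
    rw [hz2]
    have : q * z - q * z₀ = q * (z - z₀) := by ring
    rw [this, smul_eq_mul, mul_zpow]
    rw [zpow_add₀ hzz, zpow_natCast]
    ring

lemma aux_pow (x : ℂ) (hx : x ≠ 0) (a : ℕ) (b : ℤ) (c : ℕ) (h : (a : ℤ) + b = c) :
    x ^ a * x ^ b = x ^ c := by
  rw [← zpow_natCast x a, ← zpow_add₀ hx, h, zpow_natCast]

lemma key (A B C D q : ℂ) (hB : B ≠ 0) (hq : q ≠ 0)
    (f : ℂ → ℂ) (hf : ∀ z : ℂ, MeromorphicAt f z)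
    (heq : ∀ z : ℂ, AnalyticAt ℂ f z → AnalyticAt ℂ f (q * z) →
      deriv f z = A * f (q * z) + B * (f z) ^ 2 + C * f z + D)
    (z₀ : ℂ) (m : ℕ) (hm : 1 ≤ m) (hord : meromorphicOrderAt f z₀ = ((-(m : ℤ) : ℤ) : WithTop ℤ))
    (hbound : ((-(2 * (m : ℤ)) : ℤ) : WithTop ℤ) < meromorphicOrderAt f (q * z₀)) :
    m = 1 ∧ Tendsto (fun z : ℂ => (z - z₀) * f z) (𝓝[≠] z₀) (𝓝 (-1 / B)) := by
  obtain ⟨g, hg, hg0, hfg⟩ := (meromorphicOrderAt_eq_int_iff (hf z₀)).mp hord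
  simp only [smul_eq_mul] at hfg
  -- analyticity of g and deriv g near z₀
  have hgan : ∀ᶠ z in 𝓝 z₀, AnalyticAt ℂ g z := hg.eventually_analyticAt
  have hdg_an : AnalyticAt ℂ (deriv g) z₀ := by
    have h1 : AnalyticOnNhd ℂ g {z | AnalyticAt ℂ g z} := fun z hz => hz
    exact h1.deriv z₀ hg
  set φ : ℂ → ℂ := fun z => -(m : ℂ) * (z - z₀) ^ (m - 1) * g z + (z - z₀) ^ m * deriv g z
    with hφ
  have hφc : ContinuousAt φ z₀ := by
    apply ContinuousAt.add
    · exact (continuousAt_const.mul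
        (((continuous_id.sub continuous_const).continuousAt).pow _)).mul hg.continuousAt
    · exact (((continuous_id.sub continuous_const).continuousAt).pow _).mul
        hdg_an.continuousAt
  -- the key eventual identity for the LHS
  have hstep : ∀ᶠ z in 𝓝[≠] z₀, (z - z₀) ^ (2 * m) * deriv f z = φ z := by
    have hfg' : ∀ᶠ z in 𝓝 z₀, z ≠ z₀ → f z = (z - z₀) ^ (-(m : ℤ)) * g z := by
      have := eventually_nhdsWithin_iff.mp hfg
      filter_upwards [this] with z hz hzne
      exact hz hzne
    have hnn := hfg'.eventually_nhds
    rw [eventually_nhdsWithin_iff]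
    filter_upwards [hnn, hgan] with z hz1 hz3 hzmem
    have hzne : z ≠ z₀ := hzmem
    have hne' : z - z₀ ≠ 0 := sub_ne_zero.mpr hzne
    -- derivative of the local model
    have h1 : HasDerivAt (fun y : ℂ => (y - z₀) ^ (-(m : ℤ)))
        ((-(m : ℤ) : ℂ) * (z - z₀) ^ (-(m : ℤ) - 1)) z := by
      have h2 := hasDerivAt_zpow (-(m : ℤ)) (z - z₀) (Or.inl hne')
      have h3 := HasDerivAt.comp z h2 ((hasDerivAt_id z).sub_const z₀)
      simpa [Function.comp_def] using h3
    have h4 : HasDerivAt g (deriv g z) z := hz3.differentiableAt.hasDerivAt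
    have h5 := h1.mul h4
    have hdf : deriv f z = (-(m : ℤ) : ℂ) * (z - z₀) ^ (-(m : ℤ) - 1) * g z
        + (z - z₀) ^ (-(m : ℤ)) * deriv g z := by
      have hev : f =ᶠ[𝓝 z] fun y => (y - z₀) ^ (-(m : ℤ)) * g y := by
        filter_upwards [hz1, eventually_ne_nhds hzne] with y hy1 hy2
        exact hy1 hy2
      rw [hev.deriv_eq]; exact h5.deriv
    rw [hdf, hφ]
    have e1 : (z - z₀) ^ (2 * m) * (z - z₀) ^ (-(m : ℤ) - 1) = (z - z₀) ^ (m - 1) :=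
      aux_pow _ hne' _ _ _ (by omega)
    have e2 : (z - z₀) ^ (2 * m) * (z - z₀) ^ (-(m : ℤ)) = (z - z₀) ^ m :=
      aux_pow _ hne' _ _ _ (by omega)
    push_cast
    linear_combination ((-(m : ℂ)) * g z) * e1 + (deriv g z) * e2
  have hLHS : Tendsto (fun z : ℂ => (z - z₀) ^ (2 * m) * deriv f z) (𝓝[≠] z₀) (𝓝 (φ z₀)) := by
    refine (hφc.tendsto.mono_left nhdsWithin_le_nhds).congr' ?_
    filter_upwards [hstep] with z h
    exact h.symm
  -- the RHS
  have hfa : ∀ᶠ z in 𝓝[≠] z₀, AnalyticAt ℂ f z := (hf z₀).eventually_analyticAt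
  have hfqa : ∀ᶠ z in 𝓝[≠] z₀, AnalyticAt ℂ f (q * z) :=
    (aux_map q z₀ hq).eventually (hf (q * z₀)).eventually_analyticAt
  have heq' : ∀ᶠ z in 𝓝[≠] z₀, deriv f z = A * f (q * z) + B * (f z) ^ 2 + C * f z + D := by
    filter_upwards [hfa, hfqa] with z h1 h2
    exact heq z h1 h2
  have hT1 : Tendsto (fun z : ℂ => A * ((z - z₀) ^ (2 * m) * f (q * z))) (𝓝[≠] z₀) (𝓝 0) := by
    have hk : -((2 * m : ℕ) : ℤ) < meromorphicOrderAt f (q * z₀) := by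
      convert hbound using 2
      norm_cast
    have := (aux_term q z₀ hq f (hf (q * z₀)) (2 * m) hk).const_mul A
    simpa using this
  have hT2 : Tendsto (fun z : ℂ => B * g z ^ 2) (𝓝[≠] z₀) (𝓝 (B * g z₀ ^ 2)) :=
    ((continuousAt_const.mul (hg.continuousAt.pow 2)).tendsto).mono_left nhdsWithin_le_nhds
  have hpowm : ∀ k : ℕ, 1 ≤ k →
      Tendsto (fun z : ℂ => (z - z₀) ^ k) (𝓝[≠] z₀) (𝓝 0) := by
    intro k hk
    have hc : Continuous (fun z : ℂ => (z - z₀) ^ k) :=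
      (continuous_id.sub continuous_const).pow k
    have := hc.tendsto z₀
    simp only [sub_self, zero_pow (show k ≠ 0 by omega)] at this
    exact this.mono_left nhdsWithin_le_nhds
  have hT3 : Tendsto (fun z : ℂ => C * ((z - z₀) ^ m * g z)) (𝓝[≠] z₀) (𝓝 0) := by
    have := ((hpowm m hm).mul
      (hg.continuousAt.tendsto.mono_left nhdsWithin_le_nhds)).const_mul C
    simpa using this
  have hT4 : Tendsto (fun z : ℂ => D * (z - z₀) ^ (2 * m)) (𝓝[≠] z₀) (𝓝 0) := by
    have := (hpowm (2 * m) (by omega)).const_mul D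
    simpa using this
  have hRHS : Tendsto (fun z : ℂ => (z - z₀) ^ (2 * m) * deriv f z) (𝓝[≠] z₀)
      (𝓝 (B * g z₀ ^ 2)) := by
    have hsum := ((hT1.add hT2).add hT3).add hT4
    rw [zero_add, add_zero, add_zero] at hsum
    refine hsum.congr' ?_
    filter_upwards [heq', hfg, self_mem_nhdsWithin] with z h1 h2 hzmem
    have hzne : z ≠ z₀ := hzmem
    have hne' : z - z₀ ≠ 0 := sub_ne_zero.mpr hzne
    have e2 : (z - z₀) ^ (2 * m) * (z - z₀) ^ (-(m : ℤ)) = (z - z₀) ^ m :=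
      aux_pow _ hne' _ _ _ (by omega)
    have e3 : (z - z₀) ^ (2 * m) * (z - z₀) ^ (-(2 * (m : ℤ))) = 1 := by
      have := aux_pow (z - z₀) hne' (2 * m) (-(2 * (m : ℤ))) 0 (by push_cast; ring)
      simpa using this
    have h6 : ((z - z₀) ^ (-(m : ℤ))) ^ 2 = (z - z₀) ^ (-(2 * (m : ℤ))) := by
      rw [← zpow_natCast ((z - z₀) ^ (-(m : ℤ))) 2, ← zpow_mul]
      congr 1
      push_cast
      ring
    rw [h1, h2, mul_pow, h6]
    linear_combination (-(B * g z ^ 2)) * e3 + (-(C * g z)) * e2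
  have hval : φ z₀ = B * g z₀ ^ 2 := tendsto_nhds_unique hLHS hRHS
  -- deduce m = 1
  have hm1 : m = 1 := by
    by_contra hne
    have hm2 : 2 ≤ m := by omega
    have : φ z₀ = 0 := by
      rw [hφ]
      simp [sub_self, zero_pow (show m - 1 ≠ 0 by omega), zero_pow (show m ≠ 0 by omega)]
    rw [this] at hval
    exact (mul_ne_zero hB (pow_ne_zero 2 hg0)) hval.symm
  subst hm1
  have hφ0 : φ z₀ = -g z₀ := by
    rw [hφ]; simp
  rw [hφ0] at hval
  have hgval : g z₀ = -1 / B := by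
    have hfac : g z₀ * (B * g z₀ + 1) = 0 := by linear_combination -hval
    rcases mul_eq_zero.mp hfac with h | h
    · exact absurd h hg0
    · have hB1 : B * g z₀ = -1 := by linear_combination h
      rw [eq_div_iff hB]
      linear_combination hB1
  refine ⟨rfl, ?_⟩
  have htend : Tendsto g (𝓝[≠] z₀) (𝓝 (-1 / B)) := by
    rw [← hgval]
    exact hg.continuousAt.tendsto.mono_left nhdsWithin_le_nhds
  refine htend.congr' ?_
  filter_upwards [hfg, self_mem_nhdsWithin] with z h2 hzmem
  have hne' : z - z₀ ≠ 0 := sub_ne_zero.mpr (hzmem : z ≠ z₀)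
  rw [h2]
  field_simp
  simp [zpow_neg, hne']


/-- For `A ≠ 0`, `B ≠ 0`, `0 < |q| < 1`: if `f` is meromorphic on `ℂ` and
satisfies `f'(z) = A f(qz) + B f(z)² + C f(z) + D` at every `z` at which `f` is analytic
at both `z` and `qz`, then every pole of `f` is simple and has residue `-1/B`. -/
theorem stmt4 (A B C D q : ℂ) (hA : A ≠ 0) (hB : B ≠ 0)
    (hq0 : 0 < ‖q‖) (hq1 : ‖q‖ < 1)
    (f : ℂ → ℂ) (hf : ∀ z : ℂ, MeromorphicAt f z)
    (heq : ∀ z : ℂ, AnalyticAt ℂ f z → AnalyticAt ℂ f (q * z) →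
      deriv f z = A * f (q * z) + B * (f z) ^ 2 + C * f z + D) :
    ∀ z₀ : ℂ, meromorphicOrderAt f z₀ < 0 →
      meromorphicOrderAt f z₀ = (-1 : ℤ) ∧
      Tendsto (fun z : ℂ => (z - z₀) * f z) (𝓝[≠] z₀) (𝓝 (-1 / B)) := by
  have hqne : q ≠ 0 := by
    intro h; rw [h] at hq0; simp at hq0
  have getm : ∀ w : ℂ, meromorphicOrderAt f w < 0 →
      ∃ m : ℕ, 1 ≤ m ∧ meromorphicOrderAt f w = ((-(m : ℤ) : ℤ) : WithTop ℤ) := by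
    intro w hw
    have hne : meromorphicOrderAt f w ≠ ⊤ := by
      intro h; rw [h] at hw; exact absurd hw (by simp)
    obtain ⟨n, hn⟩ := WithTop.ne_top_iff_exists.mp hne
    have hn0 : n < 0 := by
      rw [← hn] at hw; exact_mod_cast hw
    refine ⟨n.natAbs, by omega, ?_⟩
    rw [← hn]
    congr 1
    omega
  have claim : ∀ (n : ℕ) (w : ℂ), meromorphicOrderAt f w < 0 → 0 ≤ meromorphicOrderAt f (q ^ n * w) →
      meromorphicOrderAt f w = ((-1 : ℤ) : WithTop ℤ) ∧
      Tendsto (fun z : ℂ => (z - w) * f z) (𝓝[≠] w) (𝓝 (-1 / B)) := by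
    intro n
    induction n with
    | zero =>
      intro w hw h0
      simp only [pow_zero, one_mul] at h0
      exact absurd (lt_of_le_of_lt h0 hw) (lt_irrefl _)
    | succ n ih =>
      intro w hw h0
      obtain ⟨m, hm1, hordm⟩ := getm w hw
      have hb : ((-(2 * (m : ℤ)) : ℤ) : WithTop ℤ) < meromorphicOrderAt f (q * w) := by
        rcases lt_or_ge (meromorphicOrderAt f (q * w)) 0 with hc | hc
        · have h0' : 0 ≤ meromorphicOrderAt f (q ^ n * (q * w)) := by
            rw [show q ^ n * (q * w) = q ^ (n + 1) * w by ring]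
            exact h0
          have hres := (ih (q * w) hc h0').1
          rw [hres]
          exact_mod_cast (by omega : -(2 * (m : ℤ)) < -1)
        · refine lt_of_lt_of_le ?_ hc
          exact_mod_cast (by omega : -(2 * (m : ℤ)) < 0)
      obtain ⟨hm1', htend⟩ := key A B C D q hB hqne f hf heq w m hm1 hordm hb
      refine ⟨?_, htend⟩
      rw [hordm, hm1']
      norm_num
  intro z₀ h0
  rcases eq_or_ne z₀ 0 with rfl | hz0
  · obtain ⟨m, hm1, hordm⟩ := getm 0 h0
    have hb : ((-(2 * (m : ℤ)) : ℤ) : WithTop ℤ) < meromorphicOrderAt f (q * 0) := by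
      rw [show q * (0 : ℂ) = 0 by ring, hordm]
      exact_mod_cast (by omega : -(2 * (m : ℤ)) < -(m : ℤ))
    obtain ⟨hm1', htend⟩ := key A B C D q hB hqne f hf heq 0 m hm1 hordm hb
    refine ⟨?_, htend⟩
    rw [hordm, hm1']
    norm_num
  · have htend0 : Tendsto (fun n : ℕ => q ^ n * z₀) atTop (𝓝[≠] 0) := by
      apply tendsto_nhdsWithin_of_tendsto_nhds_of_eventually_within
      · have h1 : Tendsto (fun n : ℕ => q ^ n) atTop (𝓝 0) := by
          apply tendsto_pow_atTop_nhds_zero_of_norm_lt_one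
          simpa using hq1
        have := h1.mul_const z₀
        simpa using this
      · filter_upwards with n
        simp only [Set.mem_compl_iff, Set.mem_singleton_iff]
        exact mul_ne_zero (pow_ne_zero _ hqne) hz0
    obtain ⟨n, hn⟩ := (htend0.eventually (hf 0).eventually_analyticAt).exists
    exact claim n z₀ h0 (aux_nonneg hn (hf _))
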